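/- arXiv:2505.18765 — 2 statements merged into one kernel-verified Lean document; each statement's English description precedes it below -/
import Mathlib

section
/- Let H be a real Hilbert space and let v_1, …, v_K ∈ H. Then the function w ↦ ‖Σ_{k=1}^K w_k v_k‖² attains its minimum over the standard simplex Δ_K at some point w*, and for any such minimizer w*, the element v* := Σ_{k=1}^K w*_k v_k is a maximizer over all v ∈ H of the function φ(v) := min_{1≤k≤K} ⟨v_k, v⟩ − (1/2)‖v‖²; that is, φ(v) ≤ φ(v*) for every v ∈ H. -/
open scoped RealInnerProductSpace

/-- Hilbert-space form of Theorem 1 (MGDA-type duality): the function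
`w ↦ ‖∑ k, w k • v k‖²` attains its minimum over the standard simplex, and for any
minimizer `w*`, the element `v* = ∑ k, w* k • v k` maximizes
`φ(v) = min_k ⟪v k, v⟫ − (1/2)‖v‖²` over all `v`. -/
theorem stmt0 {H : Type*} [NormedAddCommGroup H] [InnerProductSpace ℝ H] [CompleteSpace H]
    {K : ℕ} (hK : 0 < K) (v : Fin K → H) :
    (∃ w : Fin K → ℝ, w ∈ stdSimplex ℝ (Fin K) ∧
      ∀ u ∈ stdSimplex ℝ (Fin K), ‖∑ k, w k • v k‖ ^ 2 ≤ ‖∑ k, u k • v k‖ ^ 2) ∧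
    (∀ w : Fin K → ℝ, w ∈ stdSimplex ℝ (Fin K) →
      (∀ u ∈ stdSimplex ℝ (Fin K), ‖∑ k, w k • v k‖ ^ 2 ≤ ‖∑ k, u k • v k‖ ^ 2) →
      ∀ x : H,
        Finset.inf' Finset.univ ⟨⟨0, hK⟩, Finset.mem_univ _⟩ (fun k => ⟪v k, x⟫)
            - 1 / 2 * ‖x‖ ^ 2 ≤
          Finset.inf' Finset.univ ⟨⟨0, hK⟩, Finset.mem_univ _⟩
              (fun k => ⟪v k, ∑ i, w i • v i⟫)
            - 1 / 2 * ‖∑ i, w i • v i‖ ^ 2) := by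
  have hne : (stdSimplex ℝ (Fin K)).Nonempty := by
    refine ⟨fun _ => (K : ℝ)⁻¹, fun i => by positivity, ?_⟩
    simp [Finset.sum_const, Finset.card_univ]
    field_simp
  constructor
  · -- existence of minimizer by compactness
    have hcont : Continuous fun w : Fin K → ℝ => ‖∑ k, w k • v k‖ ^ 2 := by
      apply Continuous.pow
      apply Continuous.norm
      exact continuous_finset_sum _ fun k _ => (continuous_apply k).smul continuous_const
    obtain ⟨w, hw, hmin⟩ :=
      (isCompact_stdSimplex ℝ (Fin K)).exists_isMinOn hne hcont.continuousOn
    exact ⟨w, hw, fun u hu => hmin hu⟩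
  · intro w hw hmin x
    set V : H := ∑ i, w i • v i with hV
    -- Step A: for each k, ‖V‖² ≤ ⟪v k, V⟫
    have hA : ∀ k : Fin K, ‖V‖ ^ 2 ≤ ⟪v k, V⟫ := by
      intro k
      set d : H := v k - V with hd
      set c : ℝ := ⟪V, d⟫ with hc
      have key : ∀ t : ℝ, 0 ≤ t → t ≤ 1 → ‖V‖ ^ 2 ≤ ‖V + t • d‖ ^ 2 := by
        intro t ht0 ht1
        have hu : (fun i => (1 - t) * w i + t * (if i = k then 1 else 0)) ∈
            stdSimplex ℝ (Fin K) := by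
          constructor
          · intro i
            have := hw.1 i
            have : 0 ≤ (1 - t) * w i := by nlinarith
            positivity
          · rw [Finset.sum_add_distrib, ← Finset.mul_sum, ← Finset.mul_sum, hw.2]
            simp
        have hsum : ∑ i, ((1 - t) * w i + t * (if i = k then 1 else 0)) • v i
            = V + t • d := by
          rw [hd]
          simp only [add_smul, Finset.sum_add_distrib, mul_smul]
          rw [← Finset.smul_sum, ← Finset.smul_sum, ← hV]
          have : ∑ i, ((if i = k then (1:ℝ) else 0) • v i) = v k := by
            simp [ite_smul]
          rw [this, smul_sub, sub_smul, one_smul]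
          abel
        have := hmin _ hu
        rw [hsum] at this
        exact this
      have hc0 : 0 ≤ c := by
        by_contra hcneg
        push_neg at hcneg
        by_cases hd0 : d = 0
        · rw [hc, hd0, inner_zero_right] at hcneg; linarith
        · have hdn : (0:ℝ) < ‖d‖ ^ 2 := pow_pos (norm_pos_iff.mpr hd0) 2
          set t : ℝ := min 1 (-c / ‖d‖ ^ 2) with htdef
          have ht0 : 0 < t := lt_min one_pos (div_pos (by linarith) hdn)
          have ht1 : t ≤ 1 := min_le_left _ _
          have hexp : ‖V + t • d‖ ^ 2 = ‖V‖ ^ 2 + 2 * t * ⟪V, d⟫ + t ^ 2 * ‖d‖ ^ 2 := by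
            rw [norm_add_sq_real, real_inner_smul_right, norm_smul,
              Real.norm_eq_abs, mul_pow, sq_abs]
            ring
          rw [← hc] at hexp
          have hkey := key t ht0.le ht1
          rw [hexp] at hkey
          have htle : t ≤ -c / ‖d‖ ^ 2 := min_le_right _ _
          have : t * ‖d‖ ^ 2 ≤ -c := by
            rw [div_eq_mul_inv] at htle
            calc t * ‖d‖ ^ 2 ≤ (-c * (‖d‖ ^ 2)⁻¹) * ‖d‖ ^ 2 := by nlinarith
              _ = -c := by field_simp
          nlinarith
      have : ⟪v k, V⟫ = ‖V‖ ^ 2 + c := by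
        rw [hc, hd, inner_sub_right, real_inner_comm, real_inner_self_eq_norm_sq]
        ring
      linarith
    -- notation for the nonempty witness
    set k0 : Fin K := ⟨0, hK⟩
    -- Step B
    have hB : ‖V‖ ^ 2 ≤ Finset.inf' Finset.univ ⟨k0, Finset.mem_univ _⟩
        (fun k => ⟪v k, V⟫) := by
      apply Finset.le_inf'
      intro k _
      exact hA k
    -- Step C : inf ⟪v k, x⟫ ≤ ⟪V, x⟫
    have hC : Finset.inf' Finset.univ ⟨k0, Finset.mem_univ _⟩ (fun k => ⟪v k, x⟫)
        ≤ ⟪V, x⟫ := by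
      set m : ℝ := Finset.inf' Finset.univ ⟨k0, Finset.mem_univ _⟩ (fun k => ⟪v k, x⟫)
      have hVx : ⟪V, x⟫ = ∑ i, w i * ⟪v i, x⟫ := by
        rw [hV, sum_inner]
        simp [real_inner_smul_left]
      rw [hVx]
      calc m = ∑ i, w i * m := by rw [← Finset.sum_mul, hw.2, one_mul]
        _ ≤ ∑ i, w i * ⟪v i, x⟫ := by
            apply Finset.sum_le_sum
            intro i _
            exact mul_le_mul_of_nonneg_left
              (Finset.inf'_le _ (Finset.mem_univ i)) (hw.1 i)
    -- Step D : ⟪V, x⟫ - ½‖x‖² ≤ ½‖V‖²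
    have hD : ⟪V, x⟫ - 1 / 2 * ‖x‖ ^ 2 ≤ 1 / 2 * ‖V‖ ^ 2 := by
      have h0 : (0:ℝ) ≤ ‖V - x‖ ^ 2 := by positivity
      rw [norm_sub_sq_real] at h0
      linarith
    linarith
end

section
/- Let E be a real Hilbert space, K ≥ 1, and for k = 1, …, K let f_k : E → ℝ be differentiable at a point x ∈ E with gradient g_k := ∇f_k(x). If x is Pareto optimal for (f_1, …, f_K) — i.e., there is no y ∈ E with f_k(y) ≤ f_k(x) for all k and f_j(y) < f_j(x) for at least one j — then x is Pareto stationary: there exists w ∈ Δ_K such that Σ_{k=1}^K w_k g_k = 0. -/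
open scoped RealInnerProductSpace

/-- Claim 1 (Appendix C): Pareto optimality implies Pareto stationarity. If `x` is
Pareto optimal for `(f 1, …, f K)`, each `f k` differentiable at `x` with gradient
`g k`, then some convex combination of the gradients vanishes. -/
theorem stmt3 {E : Type*} [NormedAddCommGroup E] [InnerProductSpace ℝ E] [CompleteSpace E]
    {K : ℕ} (hK : 1 ≤ K) (f : Fin K → E → ℝ) (g : Fin K → E) (x : E)
    (hgrad : ∀ k, HasGradientAt (f k) (g k) x)
    (hpareto : ¬ ∃ y : E, (∀ k, f k y ≤ f k x) ∧ ∃ j, f j y < f j x) :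
    ∃ w : Fin K → ℝ, w ∈ stdSimplex ℝ (Fin K) ∧ ∑ k, w k • g k = 0 := by
  -- First show `0 ∈ convexHull ℝ (Set.range g)`.
  have hmem : (0 : E) ∈ convexHull ℝ (Set.range g) := by
    by_contra h0
    -- separate 0 from the compact convex hull
    obtain ⟨φ, u, hφ0, hφ⟩ := geometric_hahn_banach_point_closed
      (convex_convexHull ℝ _)
      (((Set.finite_range g).isCompact_convexHull ℝ).isClosed) h0
    have hu : 0 < u := by simpa using hφ0
    set d : E := (InnerProductSpace.toDual ℝ E).symm φ with hd
    have hdip : ∀ y : E, ⟪d, y⟫ = φ y := fun y =>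
      InnerProductSpace.toDual_symm_apply
    set v : E := -d with hv
    -- directional derivative of each `f k` along `v` is negative
    have hneg : ∀ k, ⟪g k, v⟫ < 0 := by
      intro k
      have hk : u < φ (g k) := hφ _ (subset_convexHull ℝ _ (Set.mem_range_self k))
      have : ⟪d, g k⟫ = φ (g k) := hdip _
      have h1 : ⟪g k, d⟫ = φ (g k) := by rwa [real_inner_comm] at this
      have : ⟪g k, v⟫ = -φ (g k) := by rw [hv, inner_neg_right, h1]
      rw [this]
      linarith
    -- each f k decreases along the curve t ↦ x + t • v, for small t > 0
    have hder : ∀ k, HasDerivAt (fun t : ℝ => f k (x + t • v)) ⟪g k, v⟫ 0 := by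
      intro k
      have hc : HasDerivAt (fun t : ℝ => x + t • v) v 0 := by
        simpa using ((hasDerivAt_id (0:ℝ)).smul_const v).const_add x
      have hf : HasFDerivAt (f k) (InnerProductSpace.toDual ℝ E (g k)) (x + (0:ℝ) • v) := by
        simpa using (hgrad k).hasFDerivAt
      simpa [Function.comp_def] using hf.comp_hasDerivAt 0 hc
    have hev : ∀ k, ∀ᶠ t in nhdsWithin (0:ℝ) (Set.Ioi 0),
        f k (x + t • v) < f k x := by
      intro k
      have := hasDerivAt_iff_tendsto_slope.mp (hder k)
      have hlt : ∀ᶠ t in nhdsWithin (0:ℝ) {(0:ℝ)}ᶜ,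
          slope (fun t : ℝ => f k (x + t • v)) 0 t < 0 :=
        this.eventually (eventually_lt_nhds (hneg k))
      have hle : nhdsWithin (0:ℝ) (Set.Ioi 0) ≤ nhdsWithin (0:ℝ) {(0:ℝ)}ᶜ :=
        nhdsWithin_mono _ (fun t ht => ne_of_gt ht)
      filter_upwards [hle hlt, self_mem_nhdsWithin] with t hst (ht : 0 < t)
      have : (f k (x + t • v) - f k (x + (0:ℝ) • v)) / t < 0 := by
        simpa [slope_def_field, div_eq_inv_mul] using hst
      have hnum : f k (x + t • v) - f k (x + (0:ℝ) • v) < 0 := by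
        by_contra h
        push_neg at h
        exact absurd (div_nonneg h ht.le) (not_le.mpr this)
      have : f k (x + t • v) < f k (x + (0:ℝ) • v) := by linarith
      simpa using this
    obtain ⟨t, ht⟩ := ((Filter.eventually_all (ι := Fin K)).mpr hev).exists
    exact hpareto ⟨x + t • v, fun k => (ht k).le, ⟨0, hK⟩, ht _⟩
  -- From the convex hull membership, extract simplex weights.
  rw [convexHull_range_eq_exists_affineCombination] at hmem
  obtain ⟨s, w, hw0, hw1, hwc⟩ := hmem
  refine ⟨fun k => if k ∈ s then w k else 0, ⟨fun k => ?_, ?_⟩, ?_⟩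
  · dsimp only; split
    · exact hw0 _ ‹_›
    · exact le_rfl
  · simp only [Finset.sum_ite_mem, Finset.univ_inter]
    exact hw1
  · have := (s.affineCombination_eq_linear_combination g w hw1)
    rw [this] at hwc
    calc ∑ k, (if k ∈ s then w k else 0) • g k
        = ∑ k, (if k ∈ s then w k • g k else 0) := by
          apply Finset.sum_congr rfl; intro k _; split <;> simp
      _ = ∑ k ∈ s, w k • g k := by
          rw [Finset.sum_ite_mem, Finset.univ_inter]
      _ = 0 := hwc
end
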